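/- Let r > 0 and let G be a graph with nonempty disjoint sets A, B ⊆ V(G) such that χ(A \ N_G(v)) ≤ r for all v ∈ B. Then for every y ∈ (0,1), either (i) there exist X ⊆ A and Y ⊆ B with χ(X) ≥ χ(A) − r and χ(Y) ≥ y²·χ(B) such that every vertex of X has χ(Y \ N_G(v)) < y·χ(Y) (i.e., X is (y,χ)-dense to Y), or (ii) there exists a nonempty D ⊆ A such that the set E of vertices in B with no neighbour in D satisfies y²·χ(B) ≤ χ(E) ≤ y·χ(B). -/

import Mathlib

open SimpleGraph

/-- The chromatic number of the subgraph of `G` induced on `S`, as a natural number. -/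
noncomputable def chiS {V : Type*} [Fintype V] (G : SimpleGraph V) (S : Set V) : ℕ :=
  (G.induce S).chromaticNumber.toNat

section helpers

variable {V : Type*} [Fintype V] (G : SimpleGraph V)

lemma chiS_colorable (S : Set V) : (G.induce S).Colorable (chiS G S) := by
  haveI : Finite ↥S := Subtype.finite
  exact colorable_chromaticNumber_of_fintype _

lemma chiS_le {S : Set V} {n : ℕ} (h : (G.induce S).Colorable n) : chiS G S ≤ n := by
  have h1 : (G.induce S).chromaticNumber ≤ (n : ℕ∞) := h.chromaticNumber_le
  have h2 : ((G.induce S).chromaticNumber.toNat : ℕ∞) ≤ (n : ℕ∞) := by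
    rwa [ENat.coe_toNat (lt_of_le_of_lt h1 (ENat.coe_lt_top n)).ne]
  exact_mod_cast h2

lemma chiS_mono {S T : Set V} (h : S ⊆ T) : chiS G S ≤ chiS G T :=
  chiS_le G (Colorable.of_hom (G.induceHomOfLE h).toHom (chiS_colorable G T))

lemma chiS_pos {S : Set V} (h : S.Nonempty) : 0 < chiS G S := by
  rcases h with ⟨x, hx⟩
  by_contra hc
  have h0 : chiS G S = 0 := by omega
  obtain ⟨C⟩ := chiS_colorable G S
  rw [h0] at C
  exact (C ⟨x, hx⟩).elim0

lemma nonempty_of_chiS_pos {S : Set V} (h : 0 < chiS G S) : S.Nonempty := by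
  by_contra hc
  rw [Set.not_nonempty_iff_eq_empty] at hc
  subst hc
  haveI : IsEmpty (↥(∅ : Set V)) := by exact Set.isEmpty_coe_sort.mpr rfl
  have hc : (G.induce (∅ : Set V)).Colorable 0 :=
    ⟨Coloring.mk (fun v => isEmptyElim v) (fun {v} _ => isEmptyElim v)⟩
  have := chiS_le G hc
  omega

lemma chiS_union_le (S T : Set V) : chiS G (S ∪ T) ≤ chiS G S + chiS G T := by
  classical
  obtain ⟨cS⟩ := chiS_colorable G S
  obtain ⟨cT⟩ := chiS_colorable G T
  have C : (G.induce (S ∪ T)).Coloring (Fin (chiS G S) ⊕ Fin (chiS G T)) := by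
    refine Coloring.mk
      (fun v => if h : (v : V) ∈ S then Sum.inl (cS ⟨v, h⟩)
                else Sum.inr (cT ⟨v, ((Set.mem_union _ _ _).mp v.2).resolve_left h⟩)) ?_
    intro v w hadj
    have hvw : G.Adj ↑v ↑w := hadj
    split_ifs with h1 h2 h2
    · simpa using cS.valid (by exact hvw : (G.induce S).Adj ⟨v, h1⟩ ⟨w, h2⟩)
    · simp
    · simp
    · simpa using cT.valid
        (by exact hvw : (G.induce T).Adj ⟨v, v.2.resolve_left h1⟩ ⟨w, w.2.resolve_left h2⟩)
  have := C.colorable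
  simpa using chiS_le G (this.mono (by simp))

end helpers

theorem stmt_2 {V : Type*} [Fintype V] (G : SimpleGraph V)
    (r : ℝ) (hr : 0 < r) (A B : Set V)
    (hA : A.Nonempty) (hB : B.Nonempty) (hAB : Disjoint A B)
    (hcov : ∀ v ∈ B, (chiS G (A \ G.neighborSet v) : ℝ) ≤ r)
    (y : ℝ) (hy0 : 0 < y) (hy1 : y < 1) :
    (∃ X ⊆ A, ∃ Y ⊆ B,
      (chiS G A : ℝ) - r ≤ (chiS G X : ℝ) ∧
      y ^ 2 * (chiS G B : ℝ) ≤ (chiS G Y : ℝ) ∧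
      ∀ v ∈ X, (chiS G (Y \ G.neighborSet v) : ℝ) < y * (chiS G Y : ℝ)) ∨
    (∃ D ⊆ A, D.Nonempty ∧
      y ^ 2 * (chiS G B : ℝ) ≤ (chiS G {v | v ∈ B ∧ ∀ u ∈ D, ¬ G.Adj u v} : ℝ) ∧
      (chiS G {v | v ∈ B ∧ ∀ u ∈ D, ¬ G.Adj u v} : ℝ) ≤ y * (chiS G B : ℝ)) := by
  classical
  set E : Set V → Set V := fun D => {v | v ∈ B ∧ ∀ u ∈ D, ¬ G.Adj u v} with hE
  have hEB : ∀ D : Set V, E D ⊆ B := fun D v hv => hv.1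
  have hcBpos : (0 : ℝ) < (chiS G B : ℝ) := by exact_mod_cast chiS_pos G hB
  -- the family of candidate sets D
  set P : Finset V → Prop :=
    fun D => ↑D ⊆ A ∧ y * (chiS G B : ℝ) < (chiS G (E ↑D) : ℝ) with hP
  have hE_empty : E (↑(∅ : Finset V)) = B := by
    ext v; simp [hE]
  have hPempty : P ∅ := by
    refine ⟨by simp, ?_⟩
    rw [hE_empty]
    nlinarith
  obtain ⟨D, hD, hDmax⟩ := Set.Finite.exists_maximalFor Finset.card {D | P D}
    (Set.toFinite _) ⟨∅, hPempty⟩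
  obtain ⟨hDA, hDchi⟩ := hD
  -- key fact: inserting a new vertex of A into D destroys property P
  have hins : ∀ a ∈ A, a ∉ D → (chiS G (E ↑(insert a D)) : ℝ) ≤ y * (chiS G B : ℝ) := by
    intro a ha hnd
    by_contra hcon
    push_neg at hcon
    have hmem : insert a D ∈ {D | P D} :=
      ⟨by rw [Finset.coe_insert]; exact Set.insert_subset ha hDA, hcon⟩
    have := hDmax (j := insert a D) hmem (Finset.card_le_card (Finset.subset_insert a D))
    rw [Finset.card_insert_of_notMem hnd] at this
    omega
  -- relation between E (insert a D) and E D minus neighborhood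
  have hEins : ∀ a : V, E ↑(insert a D) = E ↑D \ G.neighborSet a := by
    intro a
    ext v
    simp only [hE, Set.mem_setOf_eq, Set.mem_diff, Finset.coe_insert, Set.mem_insert_iff,
      mem_neighborSet]
    constructor
    · rintro ⟨hvB, hall⟩
      exact ⟨⟨hvB, fun u hu => hall u (Or.inr hu)⟩, hall a (Or.inl rfl)⟩
    · rintro ⟨⟨hvB, hall⟩, hna⟩
      exact ⟨hvB, fun u hu => hu.elim (fun h => h ▸ hna) (hall u)⟩
  by_cases hcase : ∃ a ∈ A, a ∉ D ∧ y ^ 2 * (chiS G B : ℝ) ≤ (chiS G (E ↑(insert a D)) : ℝ)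
  · -- alternative (ii)
    obtain ⟨a, haA, hnd, hlow⟩ := hcase
    refine Or.inr ⟨↑(insert a D), ?_, ?_, hlow, hins a haA hnd⟩
    · rw [Finset.coe_insert]; exact Set.insert_subset haA hDA
    · exact ⟨a, by simp⟩
  · -- alternative (i)
    push_neg at hcase
    set Y := E ↑D with hY
    have hYB : Y ⊆ B := hEB _
    -- Y is nonempty
    have hYpos : (0 : ℝ) < (chiS G Y : ℝ) := lt_of_le_of_lt (by positivity) hDchi
    have hYne : Y.Nonempty := nonempty_of_chiS_pos G (by exact_mod_cast hYpos)
    obtain ⟨v0, hv0⟩ := hYne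
    -- D is contained in A \ N(v0), so χ(D) ≤ r
    have hDsub : (↑D : Set V) ⊆ A \ G.neighborSet v0 := by
      intro u hu
      refine ⟨hDA hu, fun hadj => hv0.2 u hu ?_⟩
      exact (G.adj_comm u v0).mpr hadj
    have hchiD : (chiS G (↑D : Set V) : ℝ) ≤ r :=
      le_trans (by exact_mod_cast chiS_mono G hDsub) (hcov v0 (hYB hv0))
    refine Or.inl ⟨A \ ↑D, Set.diff_subset, Y, hYB, ?_, ?_, ?_⟩
    · -- χ(A) - r ≤ χ(A \ D)
      have hsplit : A = (A \ ↑D) ∪ ↑D := by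
        rw [Set.diff_union_self]; exact (Set.union_eq_self_of_subset_right hDA).symm
      have : chiS G A ≤ chiS G (A \ ↑D) + chiS G (↑D : Set V) := by
        calc chiS G A = chiS G ((A \ ↑D) ∪ ↑D) := by rw [← hsplit]
          _ ≤ _ := chiS_union_le G _ _
      have hcast : (chiS G A : ℝ) ≤ (chiS G (A \ ↑D) : ℝ) + (chiS G (↑D : Set V) : ℝ) := by
        exact_mod_cast this
      linarith
    · -- y² χ(B) ≤ χ(Y)
      nlinarith
    · -- density
      intro v hv
      have h1 : (chiS G (E ↑(insert v D)) : ℝ) < y ^ 2 * (chiS G B : ℝ) :=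
        hcase v hv.1 (fun hm => hv.2 hm)
      have h2 : Y \ G.neighborSet v = E ↑(insert v D) := (hEins v).symm
      rw [h2]
      calc (chiS G (E ↑(insert v D)) : ℝ) < y ^ 2 * (chiS G B : ℝ) := h1
        _ = y * (y * (chiS G B : ℝ)) := by ring
        _ ≤ y * (chiS G Y : ℝ) := by nlinarith
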